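/- There exists a constant C_r ≥ 1 with the following property: for every R > 0, every L-Lipschitz function f : [−R, R] → ℝ, and every δ > 0, there exist an integer n_r ≤ 2·C_r·L·R/δ and real parameters a, α_1,…,α_{n_r}, β_1,…,β_{n_r}, b_1,…,b_{n_r} such that the one-hidden-layer ReLU network f_R(x) = ∑_{i=1}^{n_r} α_i·max(β_i·x − b_i, 0) − a satisfies sup_{x ∈ [−R,R]} |f(x) − f_R(x)| ≤ δ. -/

import Mathlib

set_option maxHeartbeats 1000000


open Set Finset

/-- There is a constant `C_r ≥ 1` such that every `L`-Lipschitz function `f : [−R,R] → ℝ`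
can be approximated within `δ` in sup-norm on `[−R,R]` by a one-hidden-layer ReLU network
`f_R(x) = ∑_{i=1}^{n_r} αᵢ·max(βᵢ·x − bᵢ, 0) − a` with `n_r ≤ 2·C_r·L·R/δ` neurons. -/
theorem relu_network_approx_lipschitz :
    ∃ Cr : ℝ, 1 ≤ Cr ∧
      ∀ (R L : ℝ), 0 < R →
        ∀ f : ℝ → ℝ,
          (∀ x ∈ Icc (-R) R, ∀ y ∈ Icc (-R) R, |f x - f y| ≤ L * |x - y|) →
          ∀ δ : ℝ, 0 < δ →
            ∃ (n : ℕ), (n : ℝ) ≤ 2 * Cr * L * R / δ ∧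
              ∃ (a : ℝ) (α β b : Fin n → ℝ),
                ∀ x ∈ Icc (-R) R,
                  |f x - ((∑ i, α i * max (β i * x - b i) 0) - a)| ≤ δ := by
  refine ⟨6, by norm_num, ?_⟩
  intro R L hR f hf δ hδ
  have hmemR : ∀ y : ℝ, -R ≤ y → y ≤ R → y ∈ Icc (-R) R := fun y h1 h2 => ⟨h1, h2⟩
  have hL : 0 ≤ L := by
    have h1 := hf (-R) (hmemR _ le_rfl (by linarith)) R (hmemR _ (by linarith) le_rfl)
    have h2 : (0:ℝ) ≤ L * |(-R) - R| := le_trans (abs_nonneg _) h1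
    have h3 : |(-R) - R| = 2*R := by
      rw [abs_of_nonpos (by linarith)]; ring
    rw [h3] at h2
    nlinarith
  by_cases hcase : 2*L*R ≤ δ
  · -- constant network suffices
    refine ⟨0, ?_, -(f (-R)), fun _ => 0, fun _ => 0, fun _ => 0, ?_⟩
    · push_cast
      apply div_nonneg _ hδ.le
      nlinarith
    · intro x hx
      simp only [Finset.univ_eq_empty, Finset.sum_empty, zero_sub, sub_neg_eq_add, neg_neg]
      have h1 := hf x hx (-R) (hmemR _ le_rfl (by linarith))
      have h2 : |x - (-R)| ≤ 2*R := by
        rw [abs_of_nonneg (by linarith [hx.1])]; linarith [hx.2]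
      calc |f x - (0 + f (-R))| = |f x - f (-R)| := by ring_nf
        _ ≤ L * |x - (-R)| := h1
        _ ≤ L * (2*R) := by nlinarith
        _ ≤ δ := by linarith
  · push_neg at hcase
    have hLpos : 0 < L := by nlinarith
    set Nn : ℕ := ⌈4*L*R/δ⌉₊ with hNdef
    have hNpos : 0 < Nn := Nat.one_le_ceil_iff.mpr (by positivity)
    have hNR : (0:ℝ) < Nn := by exact_mod_cast hNpos
    set hstep : ℝ := 2*R/Nn with hstepdef
    have hh : 0 < hstep := by positivity
    have hNh : (Nn:ℝ) * hstep = 2*R := by rw [hstepdef]; field_simp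
    have hceil : 4*L*R/δ ≤ (Nn:ℝ) := Nat.le_ceil _
    have hhδ : 2*L*hstep ≤ δ := by
      rw [div_le_iff₀ hδ] at hceil
      rw [hstepdef]
      rw [show 2*L*(2*R/Nn) = (4*L*R)/Nn by ring, div_le_iff₀ hNR]
      nlinarith
    set t : ℕ → ℝ := fun i => -R + i * hstep with htdef
    have ht0 : t 0 = -R := by simp [htdef]
    have htstep : ∀ i : ℕ, t (i+1) = t i + hstep := by
      intro i; simp only [htdef]; push_cast; ring
    have tmono : ∀ i j : ℕ, i ≤ j → t i ≤ t j := by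
      intro i j hij
      simp only [htdef]
      have : (i:ℝ) ≤ j := by exact_mod_cast hij
      nlinarith
    have tmem : ∀ i : ℕ, i ≤ Nn → t i ∈ Icc (-R) R := by
      intro i hi
      have hi' : (i:ℝ) ≤ Nn := by exact_mod_cast hi
      constructor
      · simp only [htdef]
        nlinarith [mul_nonneg (Nat.cast_nonneg i : (0:ℝ) ≤ (i:ℝ)) hh.le]
      · simp only [htdef]
        nlinarith [hh.le]
    set s : ℕ → ℝ := fun i => (f (t (i+1)) - f (t i)) / hstep with hsdef
    have hsh : ∀ i, s i * hstep = f (t (i+1)) - f (t i) := by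
      intro i; rw [hsdef]; exact div_mul_cancel₀ _ (ne_of_gt hh)
    have hs : ∀ i, i < Nn → |s i| ≤ L := by
      intro i hi
      have h1 := hf (t (i+1)) (tmem _ hi) (t i) (tmem _ (Nat.le_of_lt hi))
      have h2 : |t (i+1) - t i| = hstep := by
        rw [htstep i]; rw [abs_of_nonneg (by linarith)]; ring
      rw [h2] at h1
      rw [hsdef]
      rw [abs_div, abs_of_pos hh, div_le_iff₀ hh]
      simpa using h1
    refine ⟨Nn + Nn, ?_, -(f (-R)),
      Fin.addCases (fun i : Fin Nn => s i.1) (fun i : Fin Nn => -(s i.1)),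
      fun _ => 1,
      Fin.addCases (fun i : Fin Nn => t i.1) (fun i : Fin Nn => t (i.1+1)), ?_⟩
    · -- cardinality bound
      have hNd : (Nn:ℝ) < 4*L*R/δ + 1 := Nat.ceil_lt_add_one (by positivity)
      have e : (4*L*R/δ)*δ = 4*L*R := div_mul_cancel₀ _ (ne_of_gt hδ)
      rw [le_div_iff₀ hδ]
      push_cast
      nlinarith
    · intro x hx
      obtain ⟨hx1, hx2⟩ := hx
      set k : ℕ := min (⌊(x+R)/hstep⌋₊) (Nn-1) with hkdef
      have hkN : k < Nn := lt_of_le_of_lt (min_le_right _ _) (Nat.sub_lt hNpos one_pos)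
      have hfl : (0:ℝ) ≤ (x+R)/hstep := div_nonneg (by linarith) hh.le
      have hk1 : t k ≤ x := by
        have h1 : (k:ℝ) ≤ (x+R)/hstep := by
          calc (k:ℝ) ≤ (⌊(x+R)/hstep⌋₊ : ℝ) := by exact_mod_cast min_le_left _ _
            _ ≤ (x+R)/hstep := Nat.floor_le hfl
        rw [le_div_iff₀ hh] at h1
        simp only [htdef]; linarith
      have hk2 : x ≤ t (k+1) := by
        rcases le_or_gt (⌊(x+R)/hstep⌋₊) (Nn-1) with hm | hm
        · have hk' : k = ⌊(x+R)/hstep⌋₊ := min_eq_left hm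
          have h1 : (x+R)/hstep < (⌊(x+R)/hstep⌋₊ : ℝ) + 1 := Nat.lt_floor_add_one _
          rw [div_lt_iff₀ hh] at h1
          simp only [htdef]
          rw [hk']
          push_cast
          nlinarith
        · have hk' : k = Nn - 1 := min_eq_right hm.le
          have hk'' : k + 1 = Nn := by omega
          rw [hk'']
          have : t Nn = R := by simp only [htdef]; rw [show (Nn:ℝ)*hstep = 2*R from hNh]; ring
          linarith [this]
      have hxk : 0 ≤ x - t k := by linarith
      have hxk2 : x - t k ≤ hstep := by
        have := htstep k; linarith
      -- evaluate the network sum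
      have hsum : (∑ i : Fin (Nn + Nn),
          (Fin.addCases (fun i : Fin Nn => s i.1) (fun i : Fin Nn => -(s i.1)) i) *
            max ((fun _ => (1:ℝ)) i * x -
              (Fin.addCases (fun i : Fin Nn => t i.1) (fun i : Fin Nn => t (i.1+1)) i)) 0)
          = ∑ i ∈ range Nn, (s i * max (x - t i) 0 - s i * max (x - t (i+1)) 0) := by
        rw [Fin.sum_univ_add]
        simp only [Fin.addCases_left, Fin.addCases_right, one_mul, Fin.coe_castAdd,
          Fin.coe_natAdd, neg_mul]
        rw [Fin.sum_univ_eq_sum_range (fun i => s i * max (x - t i) 0),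
          Fin.sum_univ_eq_sum_range (fun i => -(s i * max (x - t (i+1)) 0)),
          Finset.sum_neg_distrib, Finset.sum_sub_distrib]
        ring
      have heval : ∑ i ∈ range Nn, (s i * max (x - t i) 0 - s i * max (x - t (i+1)) 0)
          = (f (t k) - f (t 0)) + s k * (x - t k) := by
        have hsub : range (k+1) ⊆ range Nn := Finset.range_subset_range.mpr hkN
        have hz : ∀ i ∈ range Nn, i ∉ range (k+1) →
            (s i * max (x - t i) 0 - s i * max (x - t (i+1)) 0) = 0 := by
          intro i _ hi2
          have hik : k + 1 ≤ i := by simpa [Finset.mem_range, not_lt] using hi2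
          have h1 : x - t i ≤ 0 := by linarith [tmono _ _ hik]
          have h2 : x - t (i+1) ≤ 0 := by linarith [tmono _ _ (le_trans hik (Nat.le_succ i))]
          rw [max_eq_right h1, max_eq_right h2]; ring
        rw [← Finset.sum_subset hsub hz, Finset.sum_range_succ]
        have hterm : s k * max (x - t k) 0 - s k * max (x - t (k+1)) 0 = s k * (x - t k) := by
          rw [max_eq_left hxk, max_eq_right (by linarith : x - t (k+1) ≤ 0)]; ring
        rw [hterm]
        congr 1
        rw [← Finset.sum_range_sub (fun i => f (t i)) k]
        apply Finset.sum_congr rfl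
        intro i hi
        have hik : i + 1 ≤ k := Finset.mem_range.mp hi
        have h1 : 0 ≤ x - t i := by linarith [tmono _ _ (le_trans (Nat.le_succ i) hik), tmono i (i+1) (Nat.le_succ i)]
        have h2 : 0 ≤ x - t (i+1) := by linarith [tmono _ _ hik]
        rw [max_eq_left h1, max_eq_left h2]
        rw [← hsh i, htstep i]
        ring
      rw [hsum, heval, ht0]
      have hfin : f (t k) - f (-R) + s k * (x - t k) - -(f (-R)) = f (t k) + s k * (x - t k) := by
        ring
      rw [hfin]
      have hlip := hf x ⟨hx1, hx2⟩ (t k) (tmem _ hkN.le)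
      have habs : |x - t k| ≤ hstep := by rw [abs_of_nonneg hxk]; exact hxk2
      calc |f x - (f (t k) + s k * (x - t k))|
          = |(f x - f (t k)) - s k * (x - t k)| := by ring_nf
        _ ≤ |f x - f (t k)| + |s k * (x - t k)| := abs_sub _ _
        _ ≤ L * |x - t k| + |s k| * |x - t k| := by rw [abs_mul]; linarith
        _ ≤ L * hstep + L * hstep := by
            have h1 : |s k| * |x - t k| ≤ L * hstep :=
              mul_le_mul (hs k hkN) habs (abs_nonneg _) hL
            have h2 : L * |x - t k| ≤ L * hstep := mul_le_mul_of_nonneg_left habs hL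
            linarith
        _ ≤ δ := by linarith
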